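/- Suppose (F1)–(F4) hold on the closed subspace X_N (i.e. F restricted to X_N satisfies (F1)–(F3), and the iterates on X_N satisfy (F4)), that a(·;·,·) is uniformly coercive and bounded, and that the estimator η_N satisfies (A1)–(A2). Let (u_N^n)_{n≥0} ⊂ X_N be the iterative linearization sequence on X_N, and suppose that ‖u_N^n − u_N^{n−1}‖_X > λ η_N(u_N^n) for all n ≥ 1 (i.e. the while loop of the adaptive algorithm never terminates on X_N), where λ > 0. Then u*_N = u*, and u_N^n → u* in X as n → ∞. -/

import Mathlib

set_option autoImplicit false

/-- If the while loop of the adaptive ILG algorithm never terminates on `X_N`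
(i.e. `‖u_N^n − u_N^{n−1}‖ > λ η_N(u_N^n)` for all `n ≥ 1`), then under (F1)–(F4) on
`X_N` and (A1)–(A2) it holds that `u*_N = u*` and `u_N^n → u*` as `n → ∞`. -/
theorem stmt_12
    {X : Type*} [NormedAddCommGroup X] [InnerProductSpace ℝ X] [CompleteSpace X]
    (F : X → X →L[ℝ] ℝ) (L ν : ℝ) (hL : 0 < L) (hν : 0 < ν)
    (hF1 : ∀ u v w : X, |F u w - F v w| ≤ L * ‖u - v‖ * ‖w‖)
    (hF2 : ∀ u v : X, ν * ‖u - v‖ ^ 2 ≤ F u (u - v) - F v (u - v))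
    (ustar : X) (hustar : ∀ v : X, F ustar v = 0)
    (a : X → X →ₗ[ℝ] X →ₗ[ℝ] ℝ) (α β : ℝ) (hα : 0 < α) (hβ : 0 < β)
    (hcoer : ∀ u v : X, α * ‖v‖ ^ 2 ≤ a u v v)
    (hbdd : ∀ u v w : X, a u v w ≤ β * ‖v‖ * ‖w‖)
    (XN : Submodule ℝ X) (hXNclosed : IsClosed (XN : Set X))
    (ustarN : X) (hustarN_mem : ustarN ∈ XN) (hustarN : ∀ v ∈ XN, F ustarN v = 0)
    (u : ℕ → X) (humem : ∀ n : ℕ, u n ∈ XN)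
    (hiter : ∀ n : ℕ, ∀ w ∈ XN, a (u n) (u (n + 1)) w = a (u n) (u n) w - F (u n) w)
    (H : X → ℝ)
    (hF3 : ∀ v w : X, ∀ t : ℝ, HasDerivAt (fun s : ℝ => H (v + s • w)) (F (v + t • w) w) t)
    (CH : ℝ) (hCH : 0 < CH)
    (hF4 : ∀ n : ℕ, 1 ≤ n → CH * ‖u n - u (n - 1)‖ ^ 2 ≤ H (u (n - 1)) - H (u n))
    (η : X → ℝ) (C₁ C₂ : ℝ) (hC₁ : 1 ≤ C₁) (hC₂ : 1 ≤ C₂)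
    (hηnonneg : ∀ v ∈ XN, 0 ≤ η v)
    (hA1 : ∀ v ∈ XN, ∀ w ∈ XN, |η v - η w| ≤ C₁ * ‖v - w‖)
    (hA2 : ‖ustar - ustarN‖ ≤ C₂ * η ustarN)
    (lam : ℝ) (hlam : 0 < lam)
    (hloop : ∀ n : ℕ, 1 ≤ n → lam * η (u n) < ‖u n - u (n - 1)‖) :
    ustarN = ustar ∧ Filter.Tendsto u Filter.atTop (nhds ustar) := by
  -- Step 1 : H is bounded below by H ustarN on the iterates
  have hHlow : ∀ n : ℕ, H ustarN ≤ H (u n) := by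
    intro n
    set w : X := u n - ustarN with hw
    have hwmem : w ∈ XN := XN.sub_mem (humem n) hustarN_mem
    have hmono : MonotoneOn (fun s : ℝ => H (ustarN + s • w)) (Set.Icc 0 1) := by
      apply monotoneOn_of_deriv_nonneg (convex_Icc 0 1)
      · exact fun t _ => ((hF3 ustarN w t).continuousAt).continuousWithinAt
      · intro t _
        exact ((hF3 ustarN w t).differentiableAt).differentiableWithinAt
      · intro t ht
        rw [interior_Icc] at ht
        rw [(hF3 ustarN w t).deriv]
        have htpos : 0 < t := ht.1
        have h2 := hF2 (ustarN + t • w) ustarN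
        have hsimp : ustarN + t • w - ustarN = t • w := by abel
        rw [hsimp] at h2
        have hFz : F ustarN (t • w) = 0 := hustarN _ (XN.smul_mem t hwmem)
        have hmap : F (ustarN + t • w) (t • w) = t * F (ustarN + t • w) w := by
          simp
        rw [hFz, hmap, sub_zero, norm_smul] at h2
        have : 0 ≤ t * F (ustarN + t • w) w := by
          refine le_trans ?_ h2
          positivity
        nlinarith [this]
    have h01 := hmono (Set.mem_Icc.2 ⟨le_refl 0, zero_le_one⟩)
      (Set.mem_Icc.2 ⟨zero_le_one, le_refl 1⟩) zero_le_one
    simpa [hw] using h01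
  -- Step 2 : summability of the increments
  set c : ℕ → ℝ := fun k => ‖u (k + 1) - u k‖ with hc
  have hcnonneg : ∀ k, 0 ≤ c k := fun k => norm_nonneg _
  have hstep : ∀ k : ℕ, CH * c k ^ 2 ≤ H (u k) - H (u (k + 1)) := by
    intro k
    have := hF4 (k + 1) (Nat.le_add_left 1 k)
    simpa [hc] using this
  have hsum : Summable (fun k => CH * c k ^ 2) := by
    apply summable_of_sum_range_le (c := H (u 0) - H ustarN)
    · intro k; positivity
    · intro n
      calc ∑ k ∈ Finset.range n, CH * c k ^ 2
          ≤ ∑ k ∈ Finset.range n, (H (u k) - H (u (k + 1))) :=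
            Finset.sum_le_sum fun k _ => hstep k
        _ = H (u 0) - H (u n) := by
            exact Finset.sum_range_sub' (fun k => H (u k)) n
        _ ≤ H (u 0) - H ustarN := by linarith [hHlow n]
  have hc2zero : Filter.Tendsto (fun k => CH * c k ^ 2) Filter.atTop (nhds 0) :=
    hsum.tendsto_atTop_zero
  have hcsqzero : Filter.Tendsto (fun k => c k ^ 2) Filter.atTop (nhds 0) := by
    have := hc2zero.const_mul CH⁻¹
    simpa [mul_assoc, inv_mul_cancel_left₀ hCH.ne'] using this
  have hczero : Filter.Tendsto c Filter.atTop (nhds 0) := by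
    have hsqrt : Filter.Tendsto (fun k => Real.sqrt (c k ^ 2)) Filter.atTop (nhds 0) := by
      have := (Real.continuous_sqrt.tendsto 0).comp hcsqzero
      simpa [Function.comp_def] using this
    have h : ∀ k, Real.sqrt (c k ^ 2) = c k := fun k => by
      rw [Real.sqrt_sq (hcnonneg k)]
    simpa [h] using hsqrt
  -- Step 3 : ‖u n - ustarN‖ ≤ (β/ν) c n
  have hdist : ∀ n : ℕ, ‖u n - ustarN‖ ≤ (β / ν) * c n := by
    intro n
    set w : X := u n - ustarN with hw
    have hwmem : w ∈ XN := XN.sub_mem (humem n) hustarN_mem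
    have hFw : F (u n) w ≤ β * c n * ‖w‖ := by
      have hit := hiter n w hwmem
      have heq : F (u n) w = a (u n) (u n - u (n + 1)) w := by
        simp only [map_sub, LinearMap.sub_apply]
        linarith [hit]
      rw [heq]
      calc a (u n) (u n - u (n + 1)) w ≤ β * ‖u n - u (n + 1)‖ * ‖w‖ := hbdd _ _ _
        _ = β * c n * ‖w‖ := by rw [norm_sub_rev]
    have h2 := hF2 (u n) ustarN
    rw [← hw] at h2
    have hFz : F ustarN w = 0 := hustarN _ hwmem
    rw [hFz, sub_zero] at h2
    have hkey : ν * ‖w‖ ^ 2 ≤ β * c n * ‖w‖ := le_trans h2 hFw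
    rcases eq_or_lt_of_le (norm_nonneg w) with h0 | h0
    · rw [← h0]
      positivity
    · have : ν * ‖w‖ ≤ β * c n := by
        have := (mul_le_mul_iff_of_pos_right h0).2 (le_refl (1 : ℝ))
        nlinarith [hkey]
      rw [div_mul_eq_mul_div, le_div_iff₀ hν]
      nlinarith [this]
  -- Step 4 : u n → ustarN
  have htendN : Filter.Tendsto u Filter.atTop (nhds ustarN) := by
    rw [tendsto_iff_norm_sub_tendsto_zero]
    apply squeeze_zero (fun n => norm_nonneg _) hdist
    have := hczero.const_mul (β / ν)
    simpa using this
  -- Step 5 : η (u (n+1)) → 0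
  have hηzero : Filter.Tendsto (fun n => η (u (n + 1))) Filter.atTop (nhds 0) := by
    apply squeeze_zero (fun n => hηnonneg _ (humem _))
      (g := fun n => lam⁻¹ * c n)
    · intro n
      have h := hloop (n + 1) (Nat.le_add_left 1 n)
      simp only [Nat.add_sub_cancel] at h
      have hlt : lam * η (u (n + 1)) ≤ c n := by
        simp only [hc]; exact le_of_lt h
      rw [le_inv_mul_iff₀ hlam]
      linarith [hlt]
    · have := hczero.const_mul lam⁻¹
      simpa using this
  -- Step 6 : η ustarN = 0
  have hηN : η ustarN = 0 := by
    have hub : ∀ n : ℕ, η ustarN ≤ η (u (n + 1)) + C₁ * ‖ustarN - u (n + 1)‖ := by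
      intro n
      have := hA1 ustarN hustarN_mem (u (n + 1)) (humem (n + 1))
      have h := abs_le.1 this
      linarith [h.1, h.2]
    have hlim : Filter.Tendsto (fun n => η (u (n + 1)) + C₁ * ‖ustarN - u (n + 1)‖)
        Filter.atTop (nhds 0) := by
      have hn : Filter.Tendsto (fun n => ‖ustarN - u (n + 1)‖) Filter.atTop (nhds 0) := by
        have h1 : Filter.Tendsto (fun n : ℕ => u (n + 1)) Filter.atTop (nhds ustarN) :=
          htendN.comp (Filter.tendsto_add_atTop_nat 1)
        have := (tendsto_iff_norm_sub_tendsto_zero.1 h1)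
        simpa [norm_sub_rev] using this
      have := hηzero.add (hn.const_mul C₁)
      simpa using this
    have : η ustarN ≤ 0 := ge_of_tendsto' hlim hub
    exact le_antisymm this (hηnonneg ustarN hustarN_mem)
  -- Step 7 : conclude
  have heq : ustarN = ustar := by
    have : ‖ustar - ustarN‖ ≤ 0 := by rw [hηN] at hA2; simpa using hA2
    have : ustar - ustarN = 0 := by
      rw [← norm_le_zero_iff]; exact this
    have := sub_eq_zero.1 this
    exact this.symm
  exact ⟨heq, heq ▸ htendN⟩
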